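/- Let d ∈ ℕ, let λ : ℝᵈ → ℝᵈ be a linear map, let γ > 0 and C ∈ ℝ, and let f : ℝᵈ → ℝ be convex with f(w) ≤ C + (γ/2)·‖λw‖² for all w ∈ ℝᵈ. Then for every θ ∈ (0,1) and all z, z' ∈ ℝᵈ: f(z) − θ·f(z') ≤ (1 − θ)·C + (γ/(2(1 − θ)))·‖λ(z − θ • z')‖². -/

import Mathlib

/-- θ-difference lemma combined with quadratic growth: for convex `f` with
`f(w) ≤ C + (γ/2)‖λw‖²`, one has
`f(z) - θ f(z') ≤ (1 - θ)C + (γ/(2(1 - θ)))‖λ(z - θz')‖²`. -/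
theorem stmt_8 (d : ℕ)
    (lam : EuclideanSpace ℝ (Fin d) →ₗ[ℝ] EuclideanSpace ℝ (Fin d))
    (γ C : ℝ) (hγ : 0 < γ)
    (f : EuclideanSpace ℝ (Fin d) → ℝ) (hf : ConvexOn ℝ Set.univ f)
    (hgrowth : ∀ w : EuclideanSpace ℝ (Fin d), f w ≤ C + γ / 2 * ‖lam w‖ ^ 2) :
    ∀ θ : ℝ, θ ∈ Set.Ioo (0 : ℝ) 1 →
    ∀ z z' : EuclideanSpace ℝ (Fin d),
      f z - θ * f z' ≤ (1 - θ) * C + γ / (2 * (1 - θ)) * ‖lam (z - θ • z')‖ ^ 2 := by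
  intro θ hθ z z'
  obtain ⟨hθ0, hθ1⟩ := hθ
  have h1θ : (0:ℝ) < 1 - θ := by linarith
  set u : EuclideanSpace ℝ (Fin d) := (1 - θ)⁻¹ • (z - θ • z') with hu
  have hz : z = θ • z' + (1 - θ) • u := by
    rw [hu, smul_smul, mul_inv_cancel₀ h1θ.ne', one_smul]
    abel
  have hconv := hf.2 (Set.mem_univ z') (Set.mem_univ u) hθ0.le h1θ.le (by ring)
  rw [← hz] at hconv
  simp only [smul_eq_mul] at hconv
  have hnorm : ‖lam u‖ ^ 2 = ((1 - θ)⁻¹) ^ 2 * ‖lam (z - θ • z')‖ ^ 2 := by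
    rw [hu, map_smul, norm_smul, mul_pow, Real.norm_eq_abs, sq_abs]
  have hgu := hgrowth u
  have : f z - θ * f z' ≤ (1 - θ) * (C + γ / 2 * ‖lam u‖ ^ 2) := by
    nlinarith [hgu, hconv, h1θ]
  rw [hnorm] at this
  have key : (1 - θ) * (C + γ / 2 * (((1 - θ)⁻¹) ^ 2 * ‖lam (z - θ • z')‖ ^ 2))
      = (1 - θ) * C + γ / (2 * (1 - θ)) * ‖lam (z - θ • z')‖ ^ 2 := by
    field_simp
  linarith [this, key.le]
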